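/- Let E be a row-finite graph with vertex set E⁰ = R ⊔ S where S is the set of sinks and R the non-sinks, and adjacency data given by a transposed matrix map K : ℤ^(R) → ℤ^(R) ⊕ ℤ^(S), K(x) = ((B^t − I)x, C^t x), where B, C encode the edges from R to R and from R to S respectively. Let D be the block map on ℤ^(R) ⊕ ℤ^(S) ⊕ ℤ^(S) ⊕ ⋯ (finitely supported sequences) given by D(x, y₁, y₂, …) = (B^t x, C^t x, y₁, y₂, …). Then the natural inclusions i : ℤ^(R) → ℤ^(R) ⊕ ℤ^(S) ⊕ ⋯ and j : ℤ^(R) ⊕ ℤ^(S) → ℤ^(R) ⊕ ℤ^(S) ⊕ ⋯ (into the first coordinates) satisfy (D − 1)∘i = j∘K, and i restricts to an isomorphism Ker K ≅ Ker(D − 1), while j induces an isomorphism Coker K ≅ Coker(D − 1). -/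

import Mathlib

namespace Stmt10

variable {R S : Type*}

/-- The infinite direct sum `ℤ^(R) ⊕ ℤ^(S) ⊕ ℤ^(S) ⊕ ⋯` (the tail of copies of `ℤ^(S)`
is modelled by finitely supported sequences `ℕ →₀ ℤ^(S)`). -/
abbrev Tot (R S : Type*) := (R →₀ ℤ) × (ℕ →₀ (S →₀ ℤ))

/-- The map `K : ℤ^(R) → ℤ^(R) ⊕ ℤ^(S)`, `K x = ((Bᵗ − I) x, Cᵗ x)`. -/
noncomputable def Kmap (bt : (R →₀ ℤ) →+ (R →₀ ℤ)) (ct : (R →₀ ℤ) →+ (S →₀ ℤ)) :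
    (R →₀ ℤ) →+ (R →₀ ℤ) × (S →₀ ℤ) :=
  (bt - AddMonoidHom.id (R →₀ ℤ)).prod ct

/-- The block map `D (x, y₁, y₂, …) = (Bᵗ x, Cᵗ x, y₁, y₂, …)`. -/
noncomputable def Dmap (bt : (R →₀ ℤ) →+ (R →₀ ℤ)) (ct : (R →₀ ℤ) →+ (S →₀ ℤ)) :
    Tot R S →+ Tot R S :=
  (bt.comp (AddMonoidHom.fst _ _)).prod
    (((Finsupp.singleAddHom (0 : ℕ)).comp (ct.comp (AddMonoidHom.fst _ _))) +
      ((Finsupp.mapDomain.addMonoidHom (· + 1)).comp (AddMonoidHom.snd _ _)))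

/-- Inclusion `i : ℤ^(R) → ℤ^(R) ⊕ ℤ^(S) ⊕ ⋯` into the first coordinate. -/
noncomputable def imap : (R →₀ ℤ) →+ Tot R S := AddMonoidHom.inl _ _

/-- Inclusion `j : ℤ^(R) ⊕ ℤ^(S) → ℤ^(R) ⊕ ℤ^(S) ⊕ ⋯` into the first two coordinates. -/
noncomputable def jmap : (R →₀ ℤ) × (S →₀ ℤ) →+ Tot R S :=
  (AddMonoidHom.fst _ _).prod ((Finsupp.singleAddHom (0 : ℕ)).comp (AddMonoidHom.snd _ _))

section Aux

variable (bt : (R →₀ ℤ) →+ (R →₀ ℤ)) (ct : (R →₀ ℤ) →+ (S →₀ ℤ))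

lemma Dmap_apply (p : Tot R S) :
    Dmap bt ct p = (bt p.1, Finsupp.single 0 (ct p.1) + Finsupp.mapDomain (· + 1) p.2) := rfl

lemma jmap_apply (z : (R →₀ ℤ) × (S →₀ ℤ)) : jmap z = (z.1, Finsupp.single 0 z.2) := rfl

lemma Kmap_apply (x : R →₀ ℤ) : Kmap bt ct x = (bt x - x, ct x) := rfl

lemma shift_apply_zero (y : ℕ →₀ (S →₀ ℤ)) : Finsupp.mapDomain (· + 1) y 0 = 0 := by
  apply Finsupp.mapDomain_notin_range
  simp

lemma shift_apply_succ (y : ℕ →₀ (S →₀ ℤ)) (n : ℕ) :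
    Finsupp.mapDomain (· + 1) y (n + 1) = y n :=
  Finsupp.mapDomain_apply (add_left_injective 1) y n

lemma const_eq_zero (y : ℕ →₀ (S →₀ ℤ)) (h : ∀ n, y (n + 1) = y n) : y = 0 := by
  have h0 : ∀ n, y n = y 0 := by
    intro n
    induction n with
    | zero => rfl
    | succ n ih => rw [h, ih]
  obtain ⟨n, hn⟩ := Infinite.exists_notMem_finset y.support
  have hy0 : y 0 = 0 := by rw [← h0 n]; exact Finsupp.notMem_support_iff.mp hn
  ext m s
  rw [h0 m, hy0]
  rfl

lemma part1 (x : R →₀ ℤ) :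
    (Dmap bt ct - AddMonoidHom.id (Tot R S)) (imap x) = jmap (Kmap bt ct x) := by
  simp only [AddMonoidHom.sub_apply, AddMonoidHom.id_apply]
  rw [Dmap_apply, jmap_apply, Kmap_apply]
  simp [imap, Prod.ext_iff, Finsupp.mapDomain_zero, sub_eq_iff_eq_add]

lemma mem_ker_iff (p : Tot R S) :
    p ∈ (Dmap bt ct - AddMonoidHom.id (Tot R S)).ker ↔
      p.1 ∈ (Kmap bt ct).ker ∧ p.2 = 0 := by
  obtain ⟨x, y⟩ := p
  simp only [AddMonoidHom.mem_ker, AddMonoidHom.sub_apply, AddMonoidHom.id_apply,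
    Dmap_apply, Kmap_apply, Prod.ext_iff, Prod.fst_sub, Prod.snd_sub, Prod.fst_zero,
    Prod.snd_zero, sub_eq_zero]
  constructor
  · rintro ⟨h1, h2⟩
    have hsucc : ∀ n, y (n + 1) = y n := by
      intro n
      have h := congrArg (fun f : ℕ →₀ (S →₀ ℤ) => f (n + 1)) h2
      simp only [Finsupp.add_apply, Finsupp.single_apply, shift_apply_succ,
        if_neg (Nat.succ_ne_zero n).symm, zero_add] at h
      first | exact h | exact h.symm
    have hy : y = 0 := const_eq_zero y hsucc
    have hc : ct x = 0 := by
      have h := congrArg (fun f : ℕ →₀ (S →₀ ℤ) => f 0) h2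
      simp only [hy, Finsupp.add_apply, Finsupp.single_apply, shift_apply_zero,
        if_pos rfl, add_zero, Finsupp.coe_zero, Pi.zero_apply] at h
      exact h
    exact ⟨⟨h1, hc⟩, hy⟩
  · rintro ⟨⟨h1, h2⟩, hy⟩
    subst hy
    refine ⟨h1, ?_⟩
    simp [h2, Finsupp.mapDomain_zero]

lemma jmap_mem_range_iff (z : (R →₀ ℤ) × (S →₀ ℤ)) :
    jmap z ∈ (Dmap bt ct - AddMonoidHom.id (Tot R S)).range ↔ z ∈ (Kmap bt ct).range := by
  constructor
  · rintro ⟨⟨x, y⟩, h⟩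
    simp only [AddMonoidHom.sub_apply, AddMonoidHom.id_apply, Dmap_apply, jmap_apply,
      Prod.ext_iff, Prod.fst_sub, Prod.snd_sub] at h
    obtain ⟨h1, h2⟩ := h
    have hsucc : ∀ n, y (n + 1) = y n := by
      intro n
      have h := congrArg (fun f : ℕ →₀ (S →₀ ℤ) => f (n + 1)) h2
      simp only [Finsupp.sub_apply, Finsupp.add_apply, Finsupp.single_apply,
        shift_apply_succ, if_neg (Nat.succ_ne_zero n).symm, zero_add, sub_eq_zero] at h
      first | exact h | exact h.symm
    have hy : y = 0 := const_eq_zero y hsucc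
    subst hy
    have hc : ct x = z.2 := by
      have h := congrArg (fun f : ℕ →₀ (S →₀ ℤ) => f 0) h2
      simp only [Finsupp.sub_apply, Finsupp.add_apply, Finsupp.single_apply,
        shift_apply_zero, if_pos rfl, add_zero, sub_zero, Finsupp.coe_zero,
        Pi.zero_apply, Finsupp.mapDomain_zero] at h
      exact h
    exact ⟨x, by rw [Kmap_apply, hc, h1]⟩
  · rintro ⟨x, rfl⟩
    exact ⟨imap x, part1 bt ct x⟩

/-- Total sum of the values of a finitely supported sequence. -/
noncomputable def Tsum : (ℕ →₀ (S →₀ ℤ)) →+ (S →₀ ℤ) :=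
  Finsupp.liftAddHom fun _ => AddMonoidHom.id (S →₀ ℤ)

lemma shift_sub_mem (y : ℕ →₀ (S →₀ ℤ)) :
    ((0, Finsupp.mapDomain (· + 1) y - y) : Tot R S)
      ∈ (Dmap bt ct - AddMonoidHom.id (Tot R S)).range := by
  refine ⟨(0, y), ?_⟩
  simp only [AddMonoidHom.sub_apply, AddMonoidHom.id_apply, Dmap_apply, map_zero]
  ext <;> simp [sub_eq_iff_eq_add]

lemma single_sub_mem (s : S →₀ ℤ) (n : ℕ) :
    ((0, Finsupp.single n s - Finsupp.single 0 s) : Tot R S)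
      ∈ (Dmap bt ct - AddMonoidHom.id (Tot R S)).range := by
  induction n with
  | zero =>
    rw [sub_self]
    exact AddSubgroup.zero_mem _
  | succ n ih =>
    have h1 : ((0, Finsupp.single (n + 1) s - Finsupp.single n s) : Tot R S)
        ∈ (Dmap bt ct - AddMonoidHom.id (Tot R S)).range := by
      have := shift_sub_mem bt ct (Finsupp.single n s)
      rwa [Finsupp.mapDomain_single] at this
    have := AddSubgroup.add_mem _ h1 ih
    simpa [Prod.ext_iff, sub_add_sub_cancel] using this

lemma sub_single_Tsum_mem (y : ℕ →₀ (S →₀ ℤ)) :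
    ((0, y - Finsupp.single 0 (Tsum y)) : Tot R S)
      ∈ (Dmap bt ct - AddMonoidHom.id (Tot R S)).range := by
  induction y using Finsupp.induction with
  | zero =>
    rw [map_zero, Finsupp.single_zero, sub_zero]
    exact AddSubgroup.zero_mem _
  | single_add n s y hn hs ih =>
    have hT : Tsum (Finsupp.single n s + y) = s + Tsum y := by
      rw [map_add]
      congr 1
      exact Finsupp.liftAddHom_apply_single _ _ _
    have := AddSubgroup.add_mem _ (single_sub_mem bt ct s n) ih
    rw [hT, Finsupp.single_add]
    simpa [Prod.ext_iff, sub_add_sub_comm] using this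

end Aux

/-- `(D − 1) ∘ i = j ∘ K`; `i` restricts to an isomorphism
`Ker K ≅ Ker (D − 1)`, and `j` induces an isomorphism `Coker K ≅ Coker (D − 1)`. -/
theorem stmt_10 (bt : (R →₀ ℤ) →+ (R →₀ ℤ)) (ct : (R →₀ ℤ) →+ (S →₀ ℤ)) :
    (∀ x : R →₀ ℤ, (Dmap bt ct - AddMonoidHom.id (Tot R S)) (imap x) = jmap (Kmap bt ct x)) ∧
    (∃ e : (Kmap bt ct).ker ≃+ (Dmap bt ct - AddMonoidHom.id (Tot R S)).ker,
      ∀ x : (Kmap bt ct).ker, (e x : Tot R S) = imap (x : R →₀ ℤ)) ∧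
    (∃ e' : ((R →₀ ℤ) × (S →₀ ℤ)) ⧸ (Kmap bt ct).range ≃+
        Tot R S ⧸ (Dmap bt ct - AddMonoidHom.id (Tot R S)).range,
      ∀ z : (R →₀ ℤ) × (S →₀ ℤ),
        e' (QuotientAddGroup.mk z) = QuotientAddGroup.mk (jmap z)) := by
  refine ⟨part1 bt ct, ?_, ?_⟩
  · -- kernel isomorphism
    set DM := Dmap bt ct - AddMonoidHom.id (Tot R S) with hDM
    have hF : ∀ x : (Kmap bt ct).ker, imap (x : R →₀ ℤ) ∈ DM.ker := by
      intro x
      rw [mem_ker_iff]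
      exact ⟨x.2, rfl⟩
    have hG : ∀ w : DM.ker, (w : Tot R S).1 ∈ (Kmap bt ct).ker := by
      intro w
      exact ((mem_ker_iff bt ct _).mp w.2).1
    refine ⟨AddMonoidHom.toAddEquiv
      ((imap.comp (Kmap bt ct).ker.subtype).codRestrict DM.ker (fun x => hF x))
      (((AddMonoidHom.fst _ _).comp DM.ker.subtype).codRestrict (Kmap bt ct).ker
        (fun w => hG w)) ?_ ?_, fun x => rfl⟩
    · exact AddMonoidHom.ext fun x => rfl
    · refine AddMonoidHom.ext fun w => Subtype.ext ?_
      have h2 : (w : Tot R S).2 = 0 := ((mem_ker_iff bt ct _).mp w.2).2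
      exact Prod.ext rfl h2.symm
  · -- cokernel isomorphism
    set DM := Dmap bt ct - AddMonoidHom.id (Tot R S) with hDM
    set φ : ((R →₀ ℤ) × (S →₀ ℤ)) →+ Tot R S ⧸ DM.range :=
      (QuotientAddGroup.mk' DM.range).comp jmap with hφ
    have hker : φ.ker = (Kmap bt ct).range := by
      ext z
      rw [AddMonoidHom.mem_ker, hφ, AddMonoidHom.comp_apply, QuotientAddGroup.mk'_apply,
        QuotientAddGroup.eq_zero_iff]
      exact jmap_mem_range_iff bt ct z
    have hsurj : Function.Surjective φ := by
      intro q
      induction q using QuotientAddGroup.induction_on with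
      | H w =>
        refine ⟨(w.1, Tsum w.2), ?_⟩
        rw [hφ, AddMonoidHom.comp_apply, QuotientAddGroup.mk'_apply]
        refine (QuotientAddGroup.eq_iff_sub_mem).mpr ?_
        have := sub_single_Tsum_mem bt ct w.2
        have heq : jmap ((w.1, Tsum w.2) : (R →₀ ℤ) × (S →₀ ℤ)) - w
            = ((0, Finsupp.single 0 (Tsum w.2) - w.2) : Tot R S) := by
          rw [jmap_apply]
          ext <;> simp
        rw [heq]
        have hneg := AddSubgroup.neg_mem _ this
        simpa [Prod.ext_iff, neg_sub, hDM] using hneg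
    refine ⟨(QuotientAddGroup.quotientAddEquivOfEq hker.symm).trans
      (QuotientAddGroup.quotientKerEquivOfSurjective φ hsurj), fun z => ?_⟩
    simp only [AddEquiv.trans_apply, QuotientAddGroup.quotientAddEquivOfEq_mk]
    rfl

end Stmt10
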